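/- Let q ≥ 7 be a power of an odd prime and F = 𝔽_q. In the graph R, the number of vertices at graph distance exactly 3 from the line [0,0,0] is r₃([0,0,0]) = q³ − 4q² + 8q − 6. -/

import Mathlib

/-- Vertices: points (left component) and lines (right component), each a triple over `F`. -/
abbrev Vtx (F : Type) := (F × F × F) ⊕ (F × F × F)

/-- Adjacency for the graph `Γ_F(p₁ℓ₁, g(p₁,p₂,ℓ₁))`: a point `(p₁,p₂,p₃)` and a line
`[ℓ₁,ℓ₂,ℓ₃]` are adjacent iff `p₂+ℓ₂ = p₁ℓ₁` and `p₃+ℓ₃ = g(p₁,p₂,ℓ₁)`. -/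
def gammaAdj (F : Type) [Field F] (g : F → F → F → F) : Vtx F → Vtx F → Prop
  | Sum.inl p, Sum.inr l => p.2.1 + l.2.1 = p.1 * l.1 ∧ p.2.2 + l.2.2 = g p.1 p.2.1 l.1
  | Sum.inr l, Sum.inl p => p.2.1 + l.2.1 = p.1 * l.1 ∧ p.2.2 + l.2.2 = g p.1 p.2.1 l.1
  | _, _ => False

/-- The bipartite graph `Γ_F(p₁ℓ₁, g(p₁,p₂,ℓ₁))`. -/
def Gamma (F : Type) [Field F] (g : F → F → F → F) : SimpleGraph (Vtx F) where
  Adj := gammaAdj F g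
  symm := by
    constructor
    intro v w h
    match v, w with
    | Sum.inl p, Sum.inr l => exact h
    | Sum.inr l, Sum.inl p => exact h
  loopless := by
    constructor
    intro v h
    match v with
    | Sum.inl p => exact h
    | Sum.inr l => exact h

/-- The graph `R = Γ_F(p₁ℓ₁, p₁p₂ℓ₁(p₁+p₂+p₁p₂))`. -/
def RGraph (F : Type) [Field F] : SimpleGraph (Vtx F) :=
  Gamma F (fun p1 p2 l1 => p1 * p2 * l1 * (p1 + p2 + p1 * p2))

section GraphPart
variable {F : Type} [Field F]

def ccc (x : F × F × F) : F := x.1 * x.2.1 * (x.1 + x.2.1 + x.1 * x.2.1)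

def PP3 (x : F × F × F) : Prop :=
  (ccc x ≠ 0 ∧ x.2.2 ≠ 0) ∨ (ccc x = 0 ∧ x.2.2 = 0 ∧ x.2.1 ≠ 0)

lemma adj_iff_lr (p l : F × F × F) :
    (RGraph F).Adj (Sum.inl p) (Sum.inr l) ↔
      p.2.1 + l.2.1 = p.1 * l.1 ∧
        p.2.2 + l.2.2 = p.1 * p.2.1 * l.1 * (p.1 + p.2.1 + p.1 * p.2.1) := Iff.rfl

lemma adj_iff_rl (l p : F × F × F) :
    (RGraph F).Adj (Sum.inr l) (Sum.inl p) ↔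
      p.2.1 + l.2.1 = p.1 * l.1 ∧
        p.2.2 + l.2.2 = p.1 * p.2.1 * l.1 * (p.1 + p.2.1 + p.1 * p.2.1) := Iff.rfl

lemma not_adj_ll (p p' : F × F × F) : ¬ (RGraph F).Adj (Sum.inl p) (Sum.inl p') := fun h => h

lemma not_adj_rr (l l' : F × F × F) : ¬ (RGraph F).Adj (Sum.inr l) (Sum.inr l') := fun h => h

lemma adj_isLeft {u v : Vtx F} (h : (RGraph F).Adj u v) : u.isLeft = !v.isLeft := by
  match u, v with
  | Sum.inl p, Sum.inr l => rfl
  | Sum.inr l, Sum.inl p => rfl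
  | Sum.inl p, Sum.inl p' => exact (not_adj_ll p p' h).elim
  | Sum.inr l, Sum.inr l' => exact (not_adj_rr l l' h).elim

lemma walk_parity {u v : Vtx F} (w : (RGraph F).Walk u v) :
    (u.isLeft = v.isLeft) ↔ Even w.length := by
  induction w with
  | nil => simp
  | @cons a b c hab w ih =>
    rw [SimpleGraph.Walk.length_cons, Nat.even_add_one, ← ih, adj_isLeft hab]
    cases hb : b.isLeft <;> cases hc : c.isLeft <;> simp [hb, hc]
lemma walk3 (x : F × F × F) (l1 : F) (hl1 : l1 ≠ 0) (h : x.2.2 = ccc x * l1) :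
    ∃ w : (RGraph F).Walk (Sum.inr ((0,0,0) : F×F×F)) (Sum.inl x), w.length = 3 := by
  have h1 : (RGraph F).Adj (Sum.inr ((0,0,0) : F×F×F))
      (Sum.inl ((x.1 * l1 - x.2.1) * l1⁻¹, 0, 0)) :=
    (adj_iff_rl _ _).mpr ⟨by ring, by ring⟩
  have h2 : (RGraph F).Adj (Sum.inl (((x.1 * l1 - x.2.1) * l1⁻¹ : F), 0, 0))
      (Sum.inr (l1, x.1 * l1 - x.2.1, 0)) :=
    (adj_iff_lr _ _).mpr ⟨by field_simp; ring, by ring⟩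
  have h3 : (RGraph F).Adj (Sum.inr ((l1, x.1 * l1 - x.2.1, 0) : F×F×F)) (Sum.inl x) :=
    (adj_iff_rl _ _).mpr ⟨by ring, by rw [add_zero, h]; simp [ccc]; ring⟩
  exact ⟨.cons h1 (.cons h2 (.cons h3 .nil)), rfl⟩

lemma len3_iff (x : F × F × F) :
    (∃ w : (RGraph F).Walk (Sum.inr ((0,0,0) : F×F×F)) (Sum.inl x), w.length = 3) ↔
      (ccc x ≠ 0 ∧ x.2.2 ≠ 0) ∨ (ccc x = 0 ∧ x.2.2 = 0) := by
  constructor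
  · rintro ⟨w, hw⟩
    have h1 := w.adj_getVert_succ (i := 0) (by omega)
    have h2 := w.adj_getVert_succ (i := 1) (by omega)
    have h3 := w.adj_getVert_succ (i := 2) (by omega)
    rw [w.getVert_zero] at h1
    have hend : w.getVert 3 = Sum.inl x := by rw [← hw]; exact w.getVert_length
    rw [hend] at h3
    rcases hv1 : w.getVert 1 with pa | la
    · rw [hv1] at h1 h2
      rcases hv2 : w.getVert 2 with pb | lb
      · rw [hv2] at h2; exact (not_adj_ll pa pb h2).elim
      · rw [hv2] at h2 h3
        rw [adj_iff_rl] at h1 h3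
        rw [adj_iff_lr] at h2
        obtain ⟨e1, e2⟩ := h1
        obtain ⟨e3, e4⟩ := h2
        obtain ⟨e5, e6⟩ := h3
        have hpa1 : pa.2.1 = 0 := by simpa using e1
        have hpa2 : pa.2.2 = 0 := by simpa using e2
        rw [hpa1] at e3 e4
        rw [hpa2] at e4
        have hlb2 : lb.2.2 = 0 := by simpa using e4
        rw [hlb2, add_zero] at e6
        have hx3 : x.2.2 = ccc x * lb.1 := by rw [e6]; simp [ccc]; ring
        by_cases hc : ccc x = 0
        · right; exact ⟨hc, by rw [hx3, hc, zero_mul]⟩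
        · left
          refine ⟨hc, fun hx0 => hc ?_⟩
          rw [hx0] at hx3
          rcases mul_eq_zero.mp hx3.symm with h | h
          · exact h
          · -- lb.1 = 0
            rw [h, mul_zero] at e5
            have hlb21 : lb.2.1 = 0 := by
              have := e3
              rw [h] at this
              simpa using this
            rw [hlb21, add_zero] at e5
            simp [ccc, e5]
    · rw [hv1] at h1; exact (not_adj_rr _ la h1).elim
  · rintro (⟨hc, h3⟩ | ⟨hc, h3⟩)
    · exact walk3 x (x.2.2 * (ccc x)⁻¹) (mul_ne_zero h3 (inv_ne_zero hc)) (by field_simp)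
    · exact walk3 x 1 one_ne_zero (by rw [hc, h3, zero_mul])
lemma dist3_iff (v : Vtx F) :
    (RGraph F).dist (Sum.inr ((0,0,0) : F×F×F)) v = 3 ↔ ∃ x, v = Sum.inl x ∧ PP3 x := by
  constructor
  · intro h
    have hne0 : (RGraph F).dist (Sum.inr ((0,0,0) : F×F×F)) v ≠ 0 := by omega
    obtain ⟨w, hw⟩ := (SimpleGraph.Reachable.of_dist_ne_zero hne0).exists_walk_length_eq_dist
    rw [h] at hw
    cases v with
    | inr l =>
      exfalso
      have hp : Even w.length := (walk_parity w).mp rfl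
      rw [hw] at hp
      exact (by decide : ¬ Even 3) hp
    | inl x =>
      refine ⟨x, rfl, ?_⟩
      have hD := (len3_iff x).mp ⟨w, hw⟩
      have hnadj : ¬ (RGraph F).Adj (Sum.inr ((0,0,0) : F×F×F)) (Sum.inl x) := by
        intro hadj
        have hle := SimpleGraph.dist_le (SimpleGraph.Walk.cons hadj SimpleGraph.Walk.nil)
        simp only [SimpleGraph.Walk.length_cons, SimpleGraph.Walk.length_nil] at hle
        omega
      rw [adj_iff_rl] at hnadj
      simp only [not_and] at hnadj
      rcases hD with ⟨hc, h3⟩ | ⟨hc, h3⟩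
      · exact Or.inl ⟨hc, h3⟩
      · refine Or.inr ⟨hc, h3, fun h2 => ?_⟩
        exact hnadj (by rw [h2]; ring) (by rw [h3, h2]; ring)
  · rintro ⟨x, rfl, hP⟩
    have hE : ∃ w : (RGraph F).Walk (Sum.inr ((0,0,0) : F×F×F)) (Sum.inl x), w.length = 3 := by
      apply (len3_iff x).mpr
      rcases hP with ⟨hc, h3⟩ | ⟨hc, h3, _⟩
      · exact Or.inl ⟨hc, h3⟩
      · exact Or.inr ⟨hc, h3⟩
    obtain ⟨w, hw⟩ := hE
    have hle : (RGraph F).dist (Sum.inr ((0,0,0) : F×F×F)) (Sum.inl x) ≤ 3 :=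
      hw ▸ SimpleGraph.dist_le w
    have hreach : (RGraph F).Reachable (Sum.inr ((0,0,0) : F×F×F)) (Sum.inl x) := ⟨w⟩
    have hpos : (RGraph F).dist (Sum.inr ((0,0,0) : F×F×F)) (Sum.inl x) ≠ 0 := by
      intro h0
      rcases SimpleGraph.dist_eq_zero_iff_eq_or_not_reachable.mp h0 with h | h
      · exact absurd h (by simp)
      · exact h hreach
    have hodd : ¬ Even ((RGraph F).dist (Sum.inr ((0,0,0) : F×F×F)) (Sum.inl x)) := by
      obtain ⟨w0, hw0⟩ := hreach.exists_walk_length_eq_dist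
      rw [← hw0]
      intro hev
      have := (walk_parity w0).mpr hev
      simp at this
    have hnadj : ¬ (RGraph F).Adj (Sum.inr ((0,0,0) : F×F×F)) (Sum.inl x) := by
      intro hadj
      rw [adj_iff_rl] at hadj
      obtain ⟨e1, e2⟩ := hadj
      have hx2 : x.2.1 = 0 := by simpa using e1
      have hx3 : x.2.2 = 0 := by simpa using e2
      rcases hP with ⟨_, h3⟩ | ⟨_, _, h2⟩
      · exact h3 hx3
      · exact h2 hx2
    have h1 : (RGraph F).dist (Sum.inr ((0,0,0) : F×F×F)) (Sum.inl x) ≠ 1 := by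
      intro h1
      apply hnadj
      obtain ⟨w0, hw0⟩ := hreach.exists_walk_length_eq_dist
      rw [h1] at hw0
      have hA := w0.adj_getVert_succ (i := 0) (by omega)
      rw [w0.getVert_zero] at hA
      have hB : w0.getVert 1 = Sum.inl x := by rw [← hw0]; exact w0.getVert_length
      rwa [hB] at hA
    rw [Nat.not_even_iff] at hodd
    omega

end GraphPart
section Counting
open Finset
variable {F : Type} [Field F] [Fintype F] [DecidableEq F]

def cp (a : F × F) : F := a.1 * a.2 * (a.1 + a.2 + a.1 * a.2)

lemma card_Z : (univ.filter fun a : F × F => cp a = 0).card = 3 * Fintype.card F - 3 := by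
  have hq2 : 1 < Fintype.card F := Fintype.one_lt_card
  have hne1 : (-1 : F) ≠ 0 := neg_ne_zero.mpr one_ne_zero
  set T1 : Finset (F × F) := ({0} : Finset F) ×ˢ univ with hT1
  set T2 : Finset (F × F) := (univ.erase (0:F)) ×ˢ ({0} : Finset F) with hT2
  set T3 : Finset (F × F) :=
    ((univ.erase (0:F)).erase (-1)).image (fun a => (a, -a * (1+a)⁻¹)) with hT3
  have key : (univ.filter fun a : F × F => cp a = 0) = T1 ∪ T2 ∪ T3 := by
    ext ⟨a, b⟩
    rw [mem_filter]
    simp only [hT1, hT2, hT3, mem_filter, mem_univ, true_and, and_true, mem_union, mem_product,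
      mem_singleton, mem_erase, mem_image, cp, Prod.mk.injEq]
    constructor
    · intro h
      by_cases ha : a = 0
      · exact Or.inl (Or.inl ha)
      · by_cases hb : b = 0
        · exact Or.inl (Or.inr ⟨ha, hb⟩)
        · have hs : a + b + a * b = 0 := by
            rcases mul_eq_zero.mp h with h' | hs
            · rcases mul_eq_zero.mp h' with h'' | h''
              · exact absurd h'' ha
              · exact absurd h'' hb
            · exact hs
          have ham : a ≠ -1 := by
            intro hm
            rw [hm] at hs
            apply hne1
            linear_combination hs
          have h1a : (1 : F) + a ≠ 0 := fun h0 => ham (by linear_combination h0)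
          refine Or.inr ⟨a, ⟨ham, ha⟩, rfl, ?_⟩
          field_simp
          linear_combination -hs
    · rintro ((ha | ⟨ha, hb⟩) | ⟨t, ⟨htm, ht0⟩, rfl, hb⟩)
      · rw [ha]; ring
      · rw [hb]; ring
      · have h1t : (1 : F) + t ≠ 0 := fun h0 => htm (by linear_combination h0)
        rw [← hb]
        field_simp
        ring
  have d12 : Disjoint T1 T2 := by
    rw [Finset.disjoint_left]
    rintro ⟨a, b⟩ h1 h2
    simp only [hT1, hT2, mem_product, mem_singleton, mem_erase] at h1 h2
    exact h2.1.1 h1.1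
  have d123 : Disjoint (T1 ∪ T2) T3 := by
    rw [Finset.disjoint_left]
    rintro ⟨a, b⟩ h1 h2
    simp only [hT1, hT2, hT3, mem_union, mem_product, mem_singleton, mem_erase, mem_image,
      mem_univ, true_and, and_true, Prod.mk.injEq] at h1 h2
    obtain ⟨t, ⟨htm, ht0⟩, rfl, hb⟩ := h2
    have h1t : (1 : F) + t ≠ 0 := fun h0 => htm (by linear_combination h0)
    have hbne : b ≠ 0 := by
      rw [← hb]
      exact mul_ne_zero (neg_ne_zero.mpr ht0) (inv_ne_zero h1t)
    rcases h1 with h | ⟨h, h'⟩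
    · exact ht0 h
    · exact hbne h'
  have hinj : Function.Injective (fun a : F => (a, -a * (1+a)⁻¹)) := by
    intro x y h
    exact (Prod.mk.injEq _ _ _ _ ▸ h).1
  have c1 : T1.card = Fintype.card F := by
    rw [hT1, Finset.card_product]
    simp
  have c2 : T2.card = Fintype.card F - 1 := by
    rw [hT2, Finset.card_product]
    simp [Finset.card_erase_of_mem]
  have c3 : T3.card = Fintype.card F - 2 := by
    rw [hT3, Finset.card_image_of_injective _ hinj,
      Finset.card_erase_of_mem (by simp [hne1]), Finset.card_erase_of_mem (by simp)]
    rw [Finset.card_univ]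
    omega
  rw [key, Finset.card_union_of_disjoint d123, Finset.card_union_of_disjoint d12, c1, c2, c3]
  omega

lemma card_Z2 :
    (univ.filter fun a : F × F => cp a = 0 ∧ a.2 ≠ 0).card = 2 * Fintype.card F - 3 := by
  have hq2 : 1 < Fintype.card F := Fintype.one_lt_card
  have hsub : (univ.filter fun a : F × F => a.2 = 0) ⊆ (univ.filter fun a : F × F => cp a = 0) := by
    intro a ha
    rw [mem_filter]
    simp only [mem_filter, mem_univ, true_and, cp] at ha ⊢
    rw [ha]; ring
  have hdiff : (univ.filter fun a : F × F => cp a = 0 ∧ a.2 ≠ 0) =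
      (univ.filter fun a : F × F => cp a = 0) \ (univ.filter fun a : F × F => a.2 = 0) := by
    ext a
    simp only [mem_filter, mem_univ, true_and, mem_sdiff]
    try tauto
  have hc0 : (univ.filter fun a : F × F => a.2 = 0).card = Fintype.card F := by
    have : (univ.filter fun a : F × F => a.2 = 0) = (univ : Finset F) ×ˢ ({0} : Finset F) := by
      ext ⟨a, b⟩
      simp [mem_product, eq_comm]
    rw [this, Finset.card_product]
    simp
  rw [hdiff, Finset.card_sdiff_of_subset hsub, card_Z, hc0]
  omega

end Counting
section Main
open Finset

lemma card_P3 {F : Type} [Field F] [Fintype F] [DecidableEq F]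
    [DecidablePred (PP3 (F := F))] :
    (univ.filter (PP3 (F := F))).card =
      (Fintype.card F * Fintype.card F - (3 * Fintype.card F - 3)) * (Fintype.card F - 1)
        + (2 * Fintype.card F - 3) := by
  classical
  set e : (F × F) × F ≃ F × F × F := Equiv.prodAssoc F F F with he
  have himg : (univ.filter (PP3 (F := F))) =
      (univ.filter fun y : (F × F) × F => PP3 (e y)).image e := by
    ext x
    simp only [mem_image, mem_filter, mem_univ, true_and]
    constructor
    · intro hx
      exact ⟨e.symm x, by simpa using hx, e.apply_symm_apply x⟩
    · rintro ⟨y, hy, rfl⟩; exact hy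
  have hPQ : ∀ y : (F × F) × F, PP3 (e y) ↔
      ((cp y.1 ≠ 0 ∧ y.2 ≠ 0) ∨ (cp y.1 = 0 ∧ y.2 = 0 ∧ y.1.2 ≠ 0)) := by
    rintro ⟨⟨a, b⟩, t⟩
    simp [PP3, ccc, cp, he, Equiv.prodAssoc]
  have hsplit : (univ.filter fun y : (F × F) × F => PP3 (e y)) =
      ((univ.filter fun a : F × F => ¬ cp a = 0) ×ˢ (univ.erase (0 : F))) ∪
        ((univ.filter fun a : F × F => cp a = 0 ∧ a.2 ≠ 0) ×ˢ ({0} : Finset F)) := by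
    ext ⟨a, t⟩
    simp only [hPQ, mem_filter, mem_union, mem_product, mem_erase, mem_singleton, mem_univ,
      true_and, and_true]
    tauto
  have hdisj : Disjoint
      ((univ.filter fun a : F × F => ¬ cp a = 0) ×ˢ (univ.erase (0 : F)))
      ((univ.filter fun a : F × F => cp a = 0 ∧ a.2 ≠ 0) ×ˢ ({0} : Finset F)) := by
    rw [Finset.disjoint_left]
    rintro ⟨a, t⟩ h1 h2
    simp only [mem_product, mem_filter] at h1 h2
    exact h1.1.2 h2.1.2.1
  have hcompl : (univ.filter fun a : F × F => ¬ cp a = 0).card =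
      Fintype.card F * Fintype.card F - (3 * Fintype.card F - 3) := by
    have h := Finset.card_filter_add_card_filter_not
      (s := (univ : Finset (F × F))) (p := fun a : F × F => cp a = 0)
    rw [card_Z, Finset.card_univ, Fintype.card_prod] at h
    omega
  rw [himg, Finset.card_image_of_injective _ e.injective, hsplit,
    Finset.card_union_of_disjoint hdisj, Finset.card_product, Finset.card_product,
    hcompl, card_Z2, Finset.card_erase_of_mem (mem_univ 0), Finset.card_univ,
    Finset.card_singleton, mul_one]

end Main


/-- Let `q ≥ 7` be a power of an odd prime and `F = 𝔽_q`. In the graph `R`, the number of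
vertices at graph distance exactly 3 from the line `[0,0,0]` is `q³ − 4q² + 8q − 6`. -/
theorem r3_line_000 (q p e : ℕ) (hp : p.Prime) (hodd : Odd p) (he : 1 ≤ e) (hq : q = p ^ e)
    (h7 : 7 ≤ q) (F : Type) [Field F] [Fintype F] (hcard : Fintype.card F = q) :
    (Set.ncard {w : Vtx F | (RGraph F).dist (Sum.inr (0, 0, 0)) w = 3} : ℤ) =
      (q : ℤ) ^ 3 - 4 * (q : ℤ) ^ 2 + 8 * (q : ℤ) - 6 := by
  classical
  have hset : {w : Vtx F | (RGraph F).dist (Sum.inr (0, 0, 0)) w = 3}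
      = Sum.inl '' {x : F × F × F | PP3 x} := by
    ext v
    rw [Set.mem_setOf_eq, dist3_iff]
    constructor
    · rintro ⟨x, rfl, h⟩; exact ⟨x, h, rfl⟩
    · rintro ⟨x, h, rfl⟩; exact ⟨x, rfl, h⟩
  rw [hset, Set.ncard_image_of_injective _ Sum.inl_injective]
  have hfin : {x : F × F × F | PP3 x}.ncard = (Finset.univ.filter (PP3 (F := F))).card := by
    rw [← Set.ncard_coe_finset]
    congr 1
    ext x
    simp
  rw [hfin, card_P3, hcard]
  have h1 : 3 ≤ 3 * q := by omega
  have h2 : 3 * q - 3 ≤ q * q := by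
    have : 3 * q ≤ q * q := Nat.mul_le_mul_right q (by omega)
    omega
  have h3 : 1 ≤ q := by omega
  have h4 : 3 ≤ 2 * q := by omega
  rw [Nat.cast_add, Nat.cast_mul, Nat.cast_sub h2, Nat.cast_sub h1, Nat.cast_sub h3,
    Nat.cast_sub h4]
  push_cast
  ring
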